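/- Let V be a finite set with at least two elements, fix t₁ ∈ V, and let p : V → ℝ with p(k) > 0 for all k and Σ_{k ∈ V} p(k) = 1. Then there exists ε > 0, depending only on p, such that for every q : V → ℝ with q(k) > 0 for all k, Σ_{k ∈ V} q(k) = 1, and max_{k ∈ V} |p(k) − q(k)| < ε, the following holds: if (U_k)_{k ∈ V} are independent standard Gumbel random variables, and E_p denotes the event {∀ k ≠ t₁, log p(t₁) + U_{t₁} > log p(k) + U_k} and E_q the event {∀ k ≠ t₁, log q(t₁) + U_{t₁} > log q(k) + U_k}, then P(E_p ∩ E_q) > P(E_p)·P(E_q). -/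

import Mathlib

open MeasureTheory ProbabilityTheory

/-- The standard Gumbel distribution on `ℝ`: the Borel probability measure with density
`x ↦ exp(−x − exp(−x))` with respect to Lebesgue measure. -/
noncomputable def stdGumbel : Measure ℝ :=
  volume.withDensity fun x => ENNReal.ofReal (Real.exp (-x - Real.exp (-x)))

namespace GumbelAux

open Set Filter Real
open scoped ENNReal

/-- The Gumbel density scaled by `S`. -/
noncomputable def f (S x : ℝ) : ℝ := Real.exp (-x - S * Real.exp (-x))

/-- Antiderivative of `f S`. -/
noncomputable def F (S x : ℝ) : ℝ := Real.exp (-S * Real.exp (-x)) / S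

lemma f_nonneg (S x : ℝ) : 0 ≤ f S x := (Real.exp_pos _).le

lemma hasDerivAt_F {S : ℝ} (hS : S ≠ 0) (x : ℝ) : HasDerivAt (F S) (f S x) x := by
  have h0 : HasDerivAt (fun x : ℝ => -x) (-1) x := (hasDerivAt_id x).neg
  have h1 : HasDerivAt (fun x : ℝ => Real.exp (-x)) (Real.exp (-x) * (-1)) x := h0.exp
  have h2 : HasDerivAt (fun x : ℝ => -S * Real.exp (-x)) (-S * (Real.exp (-x) * (-1))) x :=
    h1.const_mul (-S)
  have h3 := (h2.exp).div_const S
  refine h3.congr_deriv ?_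
  unfold f
  rw [show -x - S * Real.exp (-x) = (-S * Real.exp (-x)) + (-x) by ring, Real.exp_add]
  field_simp

lemma tendsto_F_atTop {S : ℝ} : Tendsto (F S) atTop (nhds (1 / S)) := by
  have h1 : Tendsto (fun x : ℝ => -S * Real.exp (-x)) atTop (nhds 0) := by
    have := Real.tendsto_exp_neg_atTop_nhds_zero
    simpa using (this.const_mul (-S))
  have h2 : Tendsto (fun x : ℝ => Real.exp (-S * Real.exp (-x))) atTop (nhds 1) := by
    have := (Real.continuous_exp.tendsto 0).comp h1
    simpa [Function.comp_def] using this
  have := h2.div_const S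
  unfold F
  convert this using 2 with x

lemma tendsto_F_atBot {S : ℝ} (hS : 0 < S) : Tendsto (F S) atBot (nhds 0) := by
  have h0 : Tendsto (fun x : ℝ => Real.exp (-x)) atBot atTop :=
    Real.tendsto_exp_atTop.comp tendsto_neg_atBot_atTop
  have h1 : Tendsto (fun x : ℝ => -S * Real.exp (-x)) atBot atBot := by
    apply Tendsto.neg_mul_atTop (by linarith : -S < 0) tendsto_const_nhds h0
  have h2 : Tendsto (fun x : ℝ => Real.exp (-S * Real.exp (-x))) atBot (nhds 0) :=
    Real.tendsto_exp_atBot.comp h1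
  have := h2.div_const S
  unfold F
  convert this using 2 with x
  simp

lemma integrableOn_Ioi {S : ℝ} (hS : 0 < S) (a : ℝ) : IntegrableOn (f S) (Ioi a) := by
  exact integrableOn_Ioi_deriv_of_nonneg' (fun x _ => hasDerivAt_F hS.ne' x)
    (fun x _ => f_nonneg S x) tendsto_F_atTop

lemma integral_Ioi {S : ℝ} (hS : 0 < S) (a : ℝ) : ∫ x in Ioi a, f S x = 1 / S - F S a :=
  integral_Ioi_of_hasDerivAt_of_nonneg' (fun x _ => hasDerivAt_F hS.ne' x)
    (fun x _ => f_nonneg S x) tendsto_F_atTop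

lemma integrableOn_Iic {S : ℝ} (hS : 0 < S) (a : ℝ) : IntegrableOn (f S) (Iic a) := by
  have hrefl : IntegrableOn (fun x => f S (-x)) (Ioi (-a)) := by
    have hG : ∀ x, HasDerivAt (fun y : ℝ => -(F S (-y))) (f S (-x)) x := by
      intro x
      have := ((hasDerivAt_F hS.ne' (-x)).comp x ((hasDerivAt_id x).neg)).neg
      simp at this
      exact this
    have hGt : Tendsto (fun y : ℝ => -(F S (-y))) atTop (nhds 0) := by
      have := (tendsto_F_atBot hS).comp tendsto_neg_atTop_atBot
      simpa using this.neg
    exact integrableOn_Ioi_deriv_of_nonneg' (fun x _ => hG x)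
      (fun x _ => f_nonneg S (-x)) hGt
  have := (MeasurePreserving.integrableOn_comp_preimage (Measure.measurePreserving_neg
    (volume : Measure ℝ)) (Homeomorph.neg ℝ).measurableEmbedding).2 hrefl
  have h2 : (Neg.neg ⁻¹' (Ioi (-a)) : Set ℝ) = Iio a := by ext x; simp [neg_lt]
  rw [h2] at this
  have h3 : ((fun x => f S (-x)) ∘ Neg.neg) = f S := by funext x; simp
  rw [h3] at this
  exact this.congr_set_ae Iio_ae_eq_Iic.symm

lemma integral_Iic {S : ℝ} (hS : 0 < S) (a : ℝ) : ∫ x in Iic a, f S x = F S a := by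
  have := integral_Iic_of_hasDerivAt_of_tendsto' (f := F S) (f' := f S) (a := a)
    (fun x _ => hasDerivAt_F hS.ne' x) (integrableOn_Iic hS a) (tendsto_F_atBot hS)
  simpa using this

lemma integrable {S : ℝ} (hS : 0 < S) : Integrable (f S) := by
  rw [← integrableOn_univ, ← Set.Iic_union_Ioi (a := (0:ℝ))]
  exact (integrableOn_Iic hS 0).union (integrableOn_Ioi hS 0)

lemma integral_univ {S : ℝ} (hS : 0 < S) : ∫ x, f S x = 1 / S := by
  rw [← intervalIntegral.integral_Iic_add_Ioi (integrableOn_Iic hS 0) (integrableOn_Ioi hS 0),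
    integral_Iic hS 0, integral_Ioi hS 0]
  ring


lemma measurable_ofReal_f (S : ℝ) : Measurable fun x => ENNReal.ofReal (f S x) := by
  apply ENNReal.measurable_ofReal.comp
  unfold f; fun_prop

lemma lintegral_ofReal_f {S : ℝ} (hS : 0 < S) :
    ∫⁻ x, ENNReal.ofReal (f S x) = ENNReal.ofReal (1 / S) := by
  rw [← ofReal_integral_eq_lintegral_ofReal (integrable hS)
    (Filter.Eventually.of_forall (f_nonneg S)), integral_univ hS]

lemma setLIntegral_ofReal_f {S : ℝ} (hS : 0 < S) (y : ℝ) :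
    ∫⁻ x in Iic y, ENNReal.ofReal (f S x) = ENNReal.ofReal (F S y) := by
  rw [← ofReal_integral_eq_lintegral_ofReal (integrableOn_Iic hS y)
    (Filter.Eventually.of_forall (f_nonneg S)), integral_Iic hS y]

lemma stdGumbel_eq : stdGumbel = volume.withDensity fun x => ENNReal.ofReal (GumbelAux.f 1 x) := by
  unfold stdGumbel GumbelAux.f
  simp [one_mul]

instance : IsProbabilityMeasure stdGumbel := by
  constructor
  rw [stdGumbel_eq, withDensity_apply _ MeasurableSet.univ, Measure.restrict_univ,
    GumbelAux.lintegral_ofReal_f one_pos]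
  simp

lemma stdGumbel_Iio (y : ℝ) :
    stdGumbel (Iio y) = ENNReal.ofReal (Real.exp (-Real.exp (-y))) := by
  rw [stdGumbel_eq, withDensity_apply _ measurableSet_Iio,
    setLIntegral_congr (Iio_ae_eq_Iic (μ := volume) (a := y)),
    GumbelAux.setLIntegral_ofReal_f one_pos y]
  unfold GumbelAux.F
  norm_num

variable {V : Type*} [Fintype V] [DecidableEq V]

lemma measurableSet_event (t₁ : V) (c : V → ℝ) :
    MeasurableSet {f : V → ℝ | ∀ k, k ≠ t₁ → c k + f k < f t₁} := by
  have h : {f : V → ℝ | ∀ k, k ≠ t₁ → c k + f k < f t₁}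
      = ⋂ k, {f : V → ℝ | k ≠ t₁ → c k + f k < f t₁} := by ext f; simp
  rw [h]
  refine MeasurableSet.iInter fun k => ?_
  by_cases hk : k = t₁
  · simp only [hk]
    have : {f : V → ℝ | t₁ ≠ t₁ → c t₁ + f t₁ < f t₁} = Set.univ := by
      ext f; simp
    rw [this]; exact MeasurableSet.univ
  · have : {f : V → ℝ | k ≠ t₁ → c k + f k < f t₁} = {f : V → ℝ | c k + f k < f t₁} := by
      ext f; simp [hk]
    rw [this]
    exact measurableSet_lt ((measurable_pi_apply k).const_add _) (measurable_pi_apply t₁)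

lemma pi_gumbel (t₁ : V) (c : V → ℝ) :
    Measure.pi (fun _ : V => stdGumbel) {f | ∀ k, k ≠ t₁ → c k + f k < f t₁}
      = ENNReal.ofReal (1 / (1 + ∑ j : {k : V // ¬ k = t₁}, Real.exp (c (j : V)))) := by
  haveI hUniq : Unique {k : V // k = t₁} :=
    ⟨⟨⟨t₁, rfl⟩⟩, fun a => Subtype.ext a.2⟩
  set T : ℝ := ∑ j : {k : V // ¬ k = t₁}, Real.exp (c (j : V)) with hT
  have hT0 : 0 ≤ T := Finset.sum_nonneg fun j _ => (Real.exp_pos _).le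
  have hS1T : (0:ℝ) < 1 + T := by linarith
  set S : Set (V → ℝ) := {f | ∀ k, k ≠ t₁ → c k + f k < f t₁} with hSdef
  have hSm := measurableSet_event t₁ c
  have hmp := measurePreserving_piEquivPiSubtypeProd (fun _ : V => stdGumbel)
    (fun k => k = t₁)
  set e := MeasurableEquiv.piEquivPiSubtypeProd (fun _ : V => ℝ) (fun k => k = t₁) with he
  have hsm' : MeasurableSet (e.symm ⁻¹' S) := e.symm.measurable hSm
  have h1 := hmp.measure_preimage hsm'.nullMeasurableSet
  have h2 : ⇑e ⁻¹' (⇑e.symm ⁻¹' S) = S := by ext f; simp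
  rw [h2, Measure.prod_apply hsm'] at h1
  -- compute the slices
  have hpt : ∀ a : {k : V // k = t₁} → ℝ,
      (Prod.mk a ⁻¹' (⇑e.symm ⁻¹' S))
        = Set.pi Set.univ (fun j : {k : V // ¬ k = t₁} => Iio (a default - c (j : V))) := by
    intro a
    have esymm : ∀ (b : {k : V // ¬ k = t₁} → ℝ) (k : V),
        e.symm (a, b) k = if h : k = t₁ then a ⟨k, h⟩ else b ⟨k, h⟩ := fun b k => rfl
    have hae : ∀ (z : {k : V // k = t₁}), a z = a default :=
      fun z => congrArg a (Unique.eq_default z)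
    ext b
    simp only [Set.mem_preimage, hSdef, Set.mem_setOf_eq, Set.mem_pi, Set.mem_univ,
      true_implies, Set.mem_Iio, esymm]
    constructor
    · intro h j
      have hj := h j j.2
      rw [dif_neg j.2, dif_pos trivial] at hj
      simp only [hae, Subtype.coe_eta] at hj
      linarith [hj]
    · intro h k hk
      rw [dif_neg hk, dif_pos trivial]
      have hb := h ⟨k, hk⟩
      simp only [hae]
      linarith [hb]
  simp only [hpt, Measure.pi_pi, stdGumbel_Iio] at h1
  -- product of CDFs
  have hprod : ∀ x : ℝ,
      (∏ j : {k : V // ¬ k = t₁}, ENNReal.ofReal (Real.exp (-Real.exp (-(x - c (j : V))))))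
        = ENNReal.ofReal (Real.exp (-(T * Real.exp (-x)))) := by
    intro x
    rw [← ENNReal.ofReal_prod_of_nonneg (fun j _ => (Real.exp_pos _).le), ← Real.exp_sum]
    congr 1
    congr 1
    rw [hT, Finset.sum_mul, ← Finset.sum_neg_distrib]
    apply Finset.sum_congr rfl
    intro j _
    rw [show -(x - c (j : V)) = c (j : V) + (-x) by ring, Real.exp_add]
  simp only [hprod] at h1
  -- integrate out the t₁ coordinate
  set g : ℝ → ℝ≥0∞ := fun x => ENNReal.ofReal (Real.exp (-(T * Real.exp (-x)))) with hg
  have hgm : Measurable g := by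
    apply ENNReal.measurable_ofReal.comp
    fun_prop
  have h6 := (measurePreserving_funUnique stdGumbel {k : V // k = t₁}).lintegral_comp hgm
  have hinst : (Subtype.fintype (fun k : V => k = t₁)) = (@Unique.fintype _ hUniq) :=
    Subsingleton.elim _ _
  rw [hinst] at h1
  rw [h1]
  have h7 : ∫⁻ x, g x ∂stdGumbel = ENNReal.ofReal (1 / (1 + T)) := by
    rw [stdGumbel_eq, lintegral_withDensity_eq_lintegral_mul _ (measurable_ofReal_f 1) hgm]
    have hfun : ((fun x => ENNReal.ofReal (f 1 x)) * g) = fun x => ENNReal.ofReal (f (1 + T) x) := by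
      funext x
      simp only [Pi.mul_apply, hg]
      unfold f
      rw [← ENNReal.ofReal_mul (Real.exp_pos _).le, ← Real.exp_add]
      congr 1
      ring
    rw [hfun, lintegral_ofReal_f hS1T]
  rw [← h7]
  exact h6

lemma map_eq_pi {Ω : Type} [MeasurableSpace Ω] {P : Measure Ω}
    (U : V → Ω → ℝ) (hUm : ∀ k, Measurable (U k))
    (hUi : ProbabilityTheory.iIndepFun U P)
    (hUd : ∀ k, P.map (U k) = stdGumbel) :
    P.map (fun ω k => U k ω) = Measure.pi fun _ : V => stdGumbel := by
  refine (Measure.pi_eq fun s hs => ?_).symm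
  rw [Measure.map_apply (measurable_pi_lambda _ hUm) (MeasurableSet.univ_pi hs)]
  have hpre : (fun ω k => U k ω) ⁻¹' (Set.pi Set.univ s) = ⋂ k, U k ⁻¹' s k := by
    ext ω; simp [Set.mem_univ_pi]
  rw [hpre, hUi.meas_iInter fun i => ⟨s i, hs i, rfl⟩]
  exact Finset.prod_congr rfl fun i _ => by
    rw [← hUd i, Measure.map_apply (hUm i) (hs i)]

end GumbelAux

/-- **Positive correlation of coupled Gumbel-max successes.** Fix a correct token `t₁` and a
probability vector `p` with positive entries on a finite set `V` with at least two elements.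
Then there is `ε > 0`, depending only on `p`, such that for every probability vector `q` with
positive entries and `max_k |p k − q k| < ε`, and every family `(U_k)` of independent standard
Gumbel random variables, the events that `t₁` is the Gumbel-max argmax under `p` and under `q`
(with shared noise `U`) are strictly positively correlated. -/
theorem coupled_gumbel_max_positively_correlated
    {V : Type*} [Fintype V] (hV : 2 ≤ Fintype.card V) (t₁ : V)
    (p : V → ℝ) (hp : ∀ k, 0 < p k) (hps : ∑ k, p k = 1) :
    ∃ ε > 0, ∀ q : V → ℝ, (∀ k, 0 < q k) → (∑ k, q k = 1) →
      (∀ k, |p k - q k| < ε) →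
      ∀ (Ω : Type) (_ : MeasurableSpace Ω) (P : Measure Ω), IsProbabilityMeasure P →
      ∀ U : V → Ω → ℝ, (∀ k, Measurable (U k)) →
        iIndepFun U P →
        (∀ k, P.map (U k) = stdGumbel) →
        P ({ω | ∀ k ≠ t₁, Real.log (p k) + U k ω < Real.log (p t₁) + U t₁ ω} ∩
            {ω | ∀ k ≠ t₁, Real.log (q k) + U k ω < Real.log (q t₁) + U t₁ ω}) >
          P {ω | ∀ k ≠ t₁, Real.log (p k) + U k ω < Real.log (p t₁) + U t₁ ω} *
            P {ω | ∀ k ≠ t₁, Real.log (q k) + U k ω < Real.log (q t₁) + U t₁ ω} := by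
  classical
  refine ⟨1, one_pos, ?_⟩
  intro q hq hqs _ Ω mΩ P hP U hUm hUi hUd
  -- shift constants
  set cp : V → ℝ := fun k => Real.log (p k) - Real.log (p t₁) with hcp
  set cq : V → ℝ := fun k => Real.log (q k) - Real.log (q t₁) with hcq
  set cm : V → ℝ := fun k => max (cp k) (cq k) with hcm
  have hJ : Measurable (fun ω k => U k ω) := measurable_pi_lambda _ hUm
  have hmap := GumbelAux.map_eq_pi U hUm hUi hUd
  have hEv : ∀ c : V → ℝ,
      P ((fun ω k => U k ω) ⁻¹' {f | ∀ k, k ≠ t₁ → c k + f k < f t₁})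
        = ENNReal.ofReal (1 / (1 + ∑ j : {k : V // ¬ k = t₁}, Real.exp (c (j : V)))) := by
    intro c
    rw [← Measure.map_apply hJ (GumbelAux.measurableSet_event t₁ c), hmap, GumbelAux.pi_gumbel]
  -- event identifications
  have hEp : {ω | ∀ k ≠ t₁, Real.log (p k) + U k ω < Real.log (p t₁) + U t₁ ω}
      = (fun ω k => U k ω) ⁻¹' {f | ∀ k, k ≠ t₁ → cp k + f k < f t₁} := by
    ext ω
    simp only [Set.mem_setOf_eq, Set.mem_preimage, hcp]
    constructor <;> intro h k hk <;> have := h k hk <;> linarith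
  have hEq2 : {ω | ∀ k ≠ t₁, Real.log (q k) + U k ω < Real.log (q t₁) + U t₁ ω}
      = (fun ω k => U k ω) ⁻¹' {f | ∀ k, k ≠ t₁ → cq k + f k < f t₁} := by
    ext ω
    simp only [Set.mem_setOf_eq, Set.mem_preimage, hcq]
    constructor <;> intro h k hk <;> have := h k hk <;> linarith
  have hInt : ((fun ω k => U k ω) ⁻¹' {f | ∀ k, k ≠ t₁ → cp k + f k < f t₁}) ∩
      ((fun ω k => U k ω) ⁻¹' {f | ∀ k, k ≠ t₁ → cq k + f k < f t₁})
      = (fun ω k => U k ω) ⁻¹' {f | ∀ k, k ≠ t₁ → cm k + f k < f t₁} := by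
    rw [← Set.preimage_inter]
    congr 1
    ext f
    simp only [Set.mem_inter_iff, Set.mem_setOf_eq, hcm]
    constructor
    · rintro ⟨h1, h2⟩ k hk
      rw [← max_add_add_right]
      exact max_lt (h1 k hk) (h2 k hk)
    · intro h
      refine ⟨fun k hk => ?_, fun k hk => ?_⟩
      · linarith [h k hk, le_max_left (cp k) (cq k)]
      · linarith [h k hk, le_max_right (cp k) (cq k)]
  rw [hEp, hEq2, hInt, hEv, hEv, hEv]
  set A := ∑ j : {k : V // ¬ k = t₁}, Real.exp (cp (j : V)) with hA
  set B := ∑ j : {k : V // ¬ k = t₁}, Real.exp (cq (j : V)) with hB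
  set M := ∑ j : {k : V // ¬ k = t₁}, Real.exp (cm (j : V)) with hM
  have hMpos : 0 ≤ M := Finset.sum_nonneg fun j _ => (Real.exp_pos _).le
  have hsubp : ∑ j : {k : V // ¬ k = t₁}, p (j : V) = 1 - p t₁ := by
    have h1 : ∑ k ∈ Finset.univ.erase t₁, p k = ∑ j : {k : V // ¬ k = t₁}, p (j : V) :=
      Finset.sum_subtype _ (fun x => by simp) _
    have h2 := Finset.sum_erase_add Finset.univ p (Finset.mem_univ t₁)
    rw [hps, h1] at h2
    linarith
  have hsubq : ∑ j : {k : V // ¬ k = t₁}, q (j : V) = 1 - q t₁ := by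
    have h1 : ∑ k ∈ Finset.univ.erase t₁, q k = ∑ j : {k : V // ¬ k = t₁}, q (j : V) :=
      Finset.sum_subtype _ (fun x => by simp) _
    have h2 := Finset.sum_erase_add Finset.univ q (Finset.mem_univ t₁)
    rw [hqs, h1] at h2
    linarith
  have hcpval : ∀ j : V, Real.exp (cp j) = p j / p t₁ := fun j => by
    rw [hcp, Real.exp_sub, Real.exp_log (hp _), Real.exp_log (hp t₁)]
  have hcqval : ∀ j : V, Real.exp (cq j) = q j / q t₁ := fun j => by
    rw [hcq, Real.exp_sub, Real.exp_log (hq _), Real.exp_log (hq t₁)]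
  have hAinv : 1 / (1 + A) = p t₁ := by
    have hsum : (∑ j : {k : V // ¬ k = t₁}, Real.exp (cp (j : V)))
        = ∑ j : {k : V // ¬ k = t₁}, p (j : V) / p t₁ :=
      Finset.sum_congr rfl fun j _ => hcpval _
    rw [hA, hsum, ← Finset.sum_div, hsubp]
    field_simp [(hp t₁).ne']
    ring
  have hBinv : 1 / (1 + B) = q t₁ := by
    have hsum : (∑ j : {k : V // ¬ k = t₁}, Real.exp (cq (j : V)))
        = ∑ j : {k : V // ¬ k = t₁}, q (j : V) / q t₁ :=
      Finset.sum_congr rfl fun j _ => hcqval _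
    rw [hB, hsum, ← Finset.sum_div, hsubq]
    field_simp [(hq t₁).ne']
    ring
  have hcmval : ∀ j : V, Real.exp (cm j) = max (p j / p t₁) (q j / q t₁) := fun j => by
    rw [hcm]
    simp only []
    rw [Monotone.map_max Real.exp_monotone, hcpval, hcqval]
  rw [hAinv, hBinv, ← ENNReal.ofReal_mul (hp t₁).le]
  rw [gt_iff_lt, ENNReal.ofReal_lt_ofReal_iff (one_div_pos.mpr (by linarith))]
  rw [lt_div_iff₀ (by linarith : (0:ℝ) < 1 + M)]
  have hbound : p t₁ * q t₁ * M ≤ q t₁ * (1 - p t₁) + p t₁ * (1 - q t₁) := by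
    rw [hM, Finset.mul_sum]
    calc ∑ j : {k : V // ¬ k = t₁}, p t₁ * q t₁ * Real.exp (cm (j : V))
        ≤ ∑ j : {k : V // ¬ k = t₁}, (q t₁ * p (j : V) + p t₁ * q (j : V)) := by
          refine Finset.sum_le_sum fun j _ => ?_
          rw [hcmval (j : V), mul_max_of_nonneg _ _ (mul_pos (hp t₁) (hq t₁)).le]
          have e1 : p t₁ * q t₁ * (p (j:V) / p t₁) = q t₁ * p (j:V) := by
            field_simp [(hp t₁).ne']
          have e2 : p t₁ * q t₁ * (q (j:V) / q t₁) = p t₁ * q (j:V) := by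
            field_simp [(hq t₁).ne']
          rw [e1, e2]
          exact max_le_add_of_nonneg (mul_nonneg (hq t₁).le (hp _).le)
            (mul_nonneg (hp t₁).le (hq _).le)
      _ = q t₁ * (1 - p t₁) + p t₁ * (1 - q t₁) := by
          rw [Finset.sum_add_distrib, ← Finset.mul_sum, ← Finset.mul_sum, hsubp, hsubq]
  have hpt1 : p t₁ < 1 := by
    obtain ⟨k₀, hk₀⟩ := Fintype.exists_ne_of_one_lt_card (by omega) t₁
    have hsub : p t₁ + p k₀ ≤ 1 := by
      rw [← hps, ← Finset.sum_pair (Ne.symm hk₀)]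
      exact Finset.sum_le_sum_of_subset_of_nonneg (Finset.subset_univ _)
        (fun i _ _ => (hp i).le)
    linarith [hp k₀]
  have hqt1 : q t₁ < 1 := by
    obtain ⟨k₀, hk₀⟩ := Fintype.exists_ne_of_one_lt_card (by omega) t₁
    have hsub : q t₁ + q k₀ ≤ 1 := by
      rw [← hqs, ← Finset.sum_pair (Ne.symm hk₀)]
      exact Finset.sum_le_sum_of_subset_of_nonneg (Finset.subset_univ _)
        (fun i _ _ => (hq i).le)
    linarith [hq k₀]
  nlinarith [mul_pos (sub_pos.2 hpt1) (sub_pos.2 hqt1), hbound, hp t₁, hq t₁, hMpos]
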